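/- (Asymptotics of the mass of the truncated Aubin–Talenti bubble) Let $N \ge 3$, $A_N = [N(N-2)]^{(N-2)/4}$, and define $\Theta_n(r) = A_N (\frac{n}{1+n^2r^2})^{(N-2)/2}$ for $0 \le r < 1$, $\Theta_n(r) = A_N(\frac{n}{1+n^2})^{(N-2)/2}(2-r)$ for $1 \le r < 2$, and $\Theta_n(r) = 0$ for $r \ge 2$, and $U_n(x) = \Theta_n(|x|)$. Then $\|U_n\|_{L^2(\mathbb{R}^N)}^2 = O(\xi(n)/n^2)$ as $n \to \infty$, where $\xi(n) = \int_0^n \frac{s^{N-1}}{(1+s^2)^{N-2}}\,ds$ satisfies $\xi(n) = O(n)$ if $N = 3$, $\xi(n) = O(\log(1+n^2))$ if $N = 4$, and $\xi(n) = O(1)$ if $N \ge 5$. -/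

import Mathlib

open MeasureTheory Filter Asymptotics

/-- `A_N = [N(N-2)]^{(N-2)/4}`. -/
noncomputable def AN (N : ℕ) : ℝ := ((N : ℝ) * ((N : ℝ) - 2)) ^ (((N : ℝ) - 2) / 4)

/-- Radial profile of the truncated Aubin–Talenti bubble `U_n`. -/
noncomputable def Θ (N : ℕ) (n : ℕ) (r : ℝ) : ℝ :=
  if r < 1 then AN N * ((n : ℝ) / (1 + (n : ℝ) ^ 2 * r ^ 2)) ^ (((N : ℝ) - 2) / 2)
  else if r < 2 then AN N * ((n : ℝ) / (1 + (n : ℝ) ^ 2)) ^ (((N : ℝ) - 2) / 2) * (2 - r)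
  else 0

/-- `ξ(n) = ∫₀ⁿ s^{N-1}/(1+s²)^{N-2} ds`. -/
noncomputable def ξ (N : ℕ) (n : ℕ) : ℝ :=
  ∫ s in (0 : ℝ)..(n : ℝ), s ^ (N - 1) / (1 + s ^ 2) ^ (N - 2)

section Aux
open intervalIntegral Set

lemma sq_rpow (N : ℕ) (hN : 3 ≤ N) {x : ℝ} (hx : 0 ≤ x) :
    (x ^ (((N:ℝ) - 2) / 2)) ^ 2 = x ^ (N - 2) := by
  rw [← Real.rpow_natCast (x ^ (((N:ℝ)-2)/2)) 2, ← Real.rpow_mul hx]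
  have : ((N:ℝ) - 2) / 2 * (2:ℕ) = ((N - 2 : ℕ) : ℝ) := by
    have : ((N - 2 : ℕ) : ℝ) = (N:ℝ) - 2 := by
      have h2 : (2:ℕ) ≤ N := by omega
      push_cast [h2]
      ring
    rw [this]; push_cast; ring
  rw [this, Real.rpow_natCast]

section Radial
variable (N n : ℕ) (hN : 3 ≤ N) (hn : 1 ≤ n)

lemma g1cont : Continuous (fun r : ℝ => AN N ^ 2 * (r ^ (N-1) * ((n:ℝ) / (1 + (n:ℝ) ^ 2 * r ^ 2)) ^ (N - 2))) := by
  apply Continuous.mul continuous_const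
  apply Continuous.mul (by fun_prop)
  apply Continuous.pow
  apply Continuous.div continuous_const (by fun_prop)
  intro x; positivity

lemma g2cont : Continuous (fun r : ℝ => r ^ (N-1) * (AN N * ((n:ℝ)/(1+(n:ℝ)^2)) ^ (((N:ℝ)-2)/2) * (2 - r)) ^ 2) := by
  fun_prop

include hN hn in
lemma eqOn1 : EqOn (fun r : ℝ => r ^ (N-1) * (Θ N n r) ^ 2)
    (fun r : ℝ => AN N ^ 2 * (r ^ (N-1) * ((n:ℝ) / (1 + (n:ℝ) ^ 2 * r ^ 2)) ^ (N - 2))) (Icc 0 1) := by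
  intro r hr
  have hx : (0:ℝ) ≤ (n:ℝ) / (1 + (n:ℝ) ^ 2 * r ^ 2) := by positivity
  by_cases h1 : r < 1
  · simp only [Θ, if_pos h1]
    rw [mul_pow, sq_rpow N hN hx]
    ring
  · have hr1 : r = 1 := le_antisymm hr.2 (not_lt.1 h1)
    subst hr1
    simp only [Θ, if_neg h1, if_pos (by norm_num : (1:ℝ) < 2)]
    rw [mul_pow, mul_pow, sq_rpow N hN (by positivity : (0:ℝ) ≤ (n:ℝ)/(1+(n:ℝ)^2))]
    norm_num

include hN in
lemma eqOn2 : EqOn (fun r : ℝ => r ^ (N-1) * (Θ N n r) ^ 2)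
    (fun r : ℝ => r ^ (N-1) * (AN N * ((n:ℝ)/(1+(n:ℝ)^2)) ^ (((N:ℝ)-2)/2) * (2 - r)) ^ 2) (Icc 1 2) := by
  intro r hr
  by_cases h2 : r < 2
  · have h1 : ¬ r < 1 := not_lt.2 hr.1
    simp only [Θ, if_neg h1, if_pos h2]
  · have hr2 : r = 2 := le_antisymm hr.2 (not_lt.1 h2)
    subst hr2
    simp only [Θ, if_neg (by norm_num : ¬ (2:ℝ) < 1), if_neg h2]
    norm_num
end Radial

lemma subst_key (N n : ℕ) (hN : 3 ≤ N) (hn : 1 ≤ n) :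
    ∫ r in (0:ℝ)..1, r ^ (N-1) * ((n:ℝ) / (1 + (n:ℝ) ^ 2 * r ^ 2)) ^ (N - 2)
      = ξ N n / (n:ℝ) ^ 2 := by
  have hn0 : (0:ℝ) < n := by exact_mod_cast hn
  set h : ℝ → ℝ := fun u => (u/(n:ℝ)) ^ (N-1) * ((n:ℝ)/(1+u^2)) ^ (N-2) with hh
  have step1 : ∫ r in (0:ℝ)..1, r ^ (N-1) * ((n:ℝ) / (1 + (n:ℝ) ^ 2 * r ^ 2)) ^ (N - 2)
      = ∫ r in (0:ℝ)..1, h ((n:ℝ) * r) := by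
    apply intervalIntegral.integral_congr
    intro r _
    simp only [hh, mul_pow, mul_div_cancel_left₀ _ (ne_of_gt hn0)]
  have step2 : (∫ r in (0:ℝ)..1, h ((n:ℝ) * r)) = (n:ℝ)⁻¹ • ∫ u in (0:ℝ)..(n:ℝ), h u := by
    rw [intervalIntegral.integral_comp_mul_left h (ne_of_gt hn0)]
    norm_num
  have hfix : ∀ u : ℝ, h u = (1/(n:ℝ)) * (u ^ (N-1) / (1 + u^2) ^ (N-2)) := by
    intro u
    have hp : (n:ℝ) ^ (N-1) = (n:ℝ) ^ (N-2) * (n:ℝ) := by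
      rw [← pow_succ]
      congr 1
      omega
    simp only [hh, div_pow, div_mul_div_comm, hp]
    rw [div_eq_div_iff (by positivity) (by positivity)]
    ring
  have step3 : (∫ u in (0:ℝ)..(n:ℝ), h u) = (1/(n:ℝ)) * ξ N n := by
    rw [show (fun u => h u) = fun u => (1/(n:ℝ)) * (u ^ (N-1) / (1 + u^2) ^ (N-2)) from funext hfix]
    rw [intervalIntegral.integral_const_mul]
    rfl
  rw [step1, step2, step3, smul_eq_mul]
  ring

lemma radial_split (N n : ℕ) (hN : 3 ≤ N) (hn : 1 ≤ n) :
    ∫ r in Ioi (0:ℝ), r ^ (N-1) * (Θ N n r) ^ 2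
      = AN N ^ 2 * (ξ N n / (n:ℝ) ^ 2)
        + ∫ r in (1:ℝ)..2, r ^ (N-1) * (AN N * ((n:ℝ)/(1+(n:ℝ)^2)) ^ (((N:ℝ)-2)/2) * (2 - r)) ^ 2 := by
  set f : ℝ → ℝ := fun r => r ^ (N-1) * (Θ N n r) ^ 2 with hf
  have hint1 : IntegrableOn f (Ioc (0:ℝ) 1) := by
    rw [integrableOn_congr_fun ((eqOn1 N n hN hn).mono Ioc_subset_Icc_self) measurableSet_Ioc]
    exact (g1cont N n).integrableOn_Ioc
  have hint2 : IntegrableOn f (Ioc (1:ℝ) 2) := by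
    rw [integrableOn_congr_fun ((eqOn2 N n hN).mono Ioc_subset_Icc_self) measurableSet_Ioc]
    exact (g2cont N n).integrableOn_Ioc
  have hzero : ∀ r ∈ Ioi (2:ℝ), f r = 0 := by
    intro r hr
    have hr2 : (2:ℝ) < r := hr
    simp only [hf, Θ, if_neg (by linarith : ¬ r < 1), if_neg (by linarith : ¬ r < 2)]
    ring
  have hIoi : ∫ r in Ioi (0:ℝ), f r = ∫ r in Ioc (0:ℝ) 2, f r := by
    rw [← Ioc_union_Ioi_eq_Ioi (by norm_num : (0:ℝ) ≤ 2),
      setIntegral_union (Ioc_disjoint_Ioi le_rfl) measurableSet_Ioi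
        (by rw [← Ioc_union_Ioc_eq_Ioc (by norm_num : (0:ℝ) ≤ 1) (by norm_num : (1:ℝ) ≤ 2)];
            exact hint1.union hint2)
        ((integrableOn_congr_fun hzero measurableSet_Ioi).mpr (integrableOn_zero)),
      setIntegral_eq_zero_of_forall_eq_zero hzero, add_zero]
  have hsplit : ∫ r in Ioc (0:ℝ) 2, f r
      = (∫ r in Ioc (0:ℝ) 1, f r) + ∫ r in Ioc (1:ℝ) 2, f r := by
    rw [← Ioc_union_Ioc_eq_Ioc (by norm_num : (0:ℝ) ≤ 1) (by norm_num : (1:ℝ) ≤ 2),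
      setIntegral_union (Ioc_disjoint_Ioc_of_le le_rfl) measurableSet_Ioc hint1 hint2]
  have e1 : ∫ r in Ioc (0:ℝ) 1, f r = AN N ^ 2 * (ξ N n / (n:ℝ) ^ 2) := by
    rw [← intervalIntegral.integral_of_le (by norm_num : (0:ℝ) ≤ 1),
      intervalIntegral.integral_congr 
        (by rw [Set.uIcc_of_le (by norm_num : (0:ℝ) ≤ 1)]; exact eqOn1 N n hN hn),
      intervalIntegral.integral_const_mul, subst_key N n hN hn]
  have e2 : ∫ r in Ioc (1:ℝ) 2, f r
      = ∫ r in (1:ℝ)..2, r ^ (N-1) * (AN N * ((n:ℝ)/(1+(n:ℝ)^2)) ^ (((N:ℝ)-2)/2) * (2 - r)) ^ 2 := by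
    rw [← intervalIntegral.integral_of_le (by norm_num : (1:ℝ) ≤ 2)]
    exact intervalIntegral.integral_congr 
      (by rw [Set.uIcc_of_le (by norm_num : (1:ℝ) ≤ 2)]; exact eqOn2 N n hN)
  rw [hIoi, hsplit, e1, e2]

lemma xi_nonneg' (N n : ℕ) : 0 ≤ ξ N n := by
  apply intervalIntegral.integral_nonneg (by positivity)
  intro u hu
  have := hu.1
  positivity

lemma ann_nonneg (N n : ℕ) :
    0 ≤ ∫ r in (1:ℝ)..2, r ^ (N-1) * (AN N * ((n:ℝ)/(1+(n:ℝ)^2)) ^ (((N:ℝ)-2)/2) * (2 - r)) ^ 2 := by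
  apply intervalIntegral.integral_nonneg (by norm_num)
  intro u hu
  have := hu.1
  positivity

lemma ann_bound (N n : ℕ) (hN : 3 ≤ N) :
    (∫ r in (1:ℝ)..2, r ^ (N-1) * (AN N * ((n:ℝ)/(1+(n:ℝ)^2)) ^ (((N:ℝ)-2)/2) * (2 - r)) ^ 2)
      ≤ 2 ^ (N-1) * AN N ^ 2 * ((n:ℝ) ^ (N-2) / (1+(n:ℝ)^2) ^ (N-2)) := by
  have hy : (0:ℝ) ≤ (n:ℝ)/(1+(n:ℝ)^2) := by positivity
  have h := intervalIntegral.integral_mono_on (μ := volume) (a := (1:ℝ)) (b := (2:ℝ))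
    (f := fun r : ℝ => r ^ (N-1) * (AN N * ((n:ℝ)/(1+(n:ℝ)^2)) ^ (((N:ℝ)-2)/2) * (2 - r)) ^ 2)
    (g := fun _ : ℝ => 2 ^ (N-1) * (AN N ^ 2 * ((n:ℝ)/(1+(n:ℝ)^2)) ^ (N-2)))
    (by norm_num) ((g2cont N n).intervalIntegrable _ _) intervalIntegrable_const ?_
  · rw [intervalIntegral.integral_const, smul_eq_mul] at h
    calc (∫ r in (1:ℝ)..2, r ^ (N-1) * (AN N * ((n:ℝ)/(1+(n:ℝ)^2)) ^ (((N:ℝ)-2)/2) * (2 - r)) ^ 2)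
        ≤ ((2:ℝ) - 1) * (2 ^ (N-1) * (AN N ^ 2 * ((n:ℝ)/(1+(n:ℝ)^2)) ^ (N-2))) := h
      _ = 2 ^ (N-1) * AN N ^ 2 * ((n:ℝ) ^ (N-2) / (1+(n:ℝ)^2) ^ (N-2)) := by
          rw [div_pow]; ring
  · intro r hr
    have hr1 := hr.1
    have hr2 := hr.2
    have hw : (AN N * ((n:ℝ)/(1+(n:ℝ)^2)) ^ (((N:ℝ)-2)/2) * (2 - r)) ^ 2
        = AN N ^ 2 * ((n:ℝ)/(1+(n:ℝ)^2)) ^ (N-2) * (2 - r) ^ 2 := by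
      rw [mul_pow, mul_pow, sq_rpow N hN hy]
    show r ^ (N-1) * (AN N * ((n:ℝ)/(1+(n:ℝ)^2)) ^ (((N:ℝ)-2)/2) * (2 - r)) ^ 2
        ≤ 2 ^ (N-1) * (AN N ^ 2 * ((n:ℝ)/(1+(n:ℝ)^2)) ^ (N-2))
    rw [hw]
    have h1 : r ^ (N-1) ≤ 2 ^ (N-1) := pow_le_pow_left₀ (by linarith) hr2 _
    have h2 : (2 - r) ^ 2 ≤ 1 := by nlinarith
    have h3 : (0:ℝ) ≤ AN N ^ 2 * ((n:ℝ)/(1+(n:ℝ)^2)) ^ (N-2) := by positivity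
    calc r ^ (N-1) * (AN N ^ 2 * ((n:ℝ)/(1+(n:ℝ)^2)) ^ (N-2) * (2 - r) ^ 2)
        ≤ 2 ^ (N-1) * (AN N ^ 2 * ((n:ℝ)/(1+(n:ℝ)^2)) ^ (N-2) * 1) := by
          apply mul_le_mul h1 ?_ (by positivity) (by positivity)
          exact mul_le_mul_of_nonneg_left h2 h3
      _ = 2 ^ (N-1) * (AN N ^ 2 * ((n:ℝ)/(1+(n:ℝ)^2)) ^ (N-2)) := by ring
lemma fcont (N : ℕ) : Continuous (fun s : ℝ => s ^ (N - 1) / (1 + s ^ 2) ^ (N - 2)) := by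
  apply Continuous.div (by fun_prop) (by fun_prop)
  intro x; positivity

lemma xi_lower (N n : ℕ) (hN : 1 ≤ N) (hn : 1 ≤ n) :
    (n : ℝ) ^ N / (1 + (n : ℝ) ^ 2) ^ (N - 2) ≤ 2 ^ N * ξ N n := by
  have hn0 : (0:ℝ) < n := by exact_mod_cast hn
  have hint : ∀ a b : ℝ, IntervalIntegrable (fun s : ℝ => s ^ (N - 1) / (1 + s ^ 2) ^ (N - 2)) volume a b :=
    fun a b => (fcont N).intervalIntegrable a b
  have hsplit : ξ N n = (∫ s in (0:ℝ)..((n:ℝ)/2), s ^ (N - 1) / (1 + s ^ 2) ^ (N - 2))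
      + ∫ s in ((n:ℝ)/2)..(n:ℝ), s ^ (N - 1) / (1 + s ^ 2) ^ (N - 2) := by
    rw [ξ, ← intervalIntegral.integral_add_adjacent_intervals (hint 0 ((n:ℝ)/2)) (hint ((n:ℝ)/2) n)]
  have h1 : (0:ℝ) ≤ ∫ s in (0:ℝ)..((n:ℝ)/2), s ^ (N - 1) / (1 + s ^ 2) ^ (N - 2) := by
    apply intervalIntegral.integral_nonneg (by positivity)
    intro u hu
    have := hu.1
    positivity
  have h2 : ((n:ℝ) - (n:ℝ)/2) * (((n:ℝ)/2) ^ (N-1) / (1 + (n:ℝ) ^ 2) ^ (N - 2))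
      ≤ ∫ s in ((n:ℝ)/2)..(n:ℝ), s ^ (N - 1) / (1 + s ^ 2) ^ (N - 2) := by
    have hmono := intervalIntegral.integral_mono_on (μ := volume) (a := (n:ℝ)/2) (b := (n:ℝ))
      (f := fun _ : ℝ => ((n:ℝ)/2) ^ (N-1) / (1 + (n:ℝ) ^ 2) ^ (N - 2))
      (g := fun s : ℝ => s ^ (N - 1) / (1 + s ^ 2) ^ (N - 2)) (by linarith)
      intervalIntegrable_const (hint _ _) ?_
    · rw [intervalIntegral.integral_const, smul_eq_mul] at hmono
      exact hmono
    · intro s hs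
      have hs1 : (n:ℝ)/2 ≤ s := hs.1
      have hs0 : (0:ℝ) ≤ s := by linarith
      apply div_le_div₀ (by positivity) (pow_le_pow_left₀ (by positivity) hs1 _) (by positivity)
      apply pow_le_pow_left₀ (by positivity)
      nlinarith [hs.2, hn0]
  have hNk : N - 1 + 1 = N := by omega
  have key : ((n:ℝ) - (n:ℝ)/2) * (((n:ℝ)/2) ^ (N-1) / (1 + (n:ℝ) ^ 2) ^ (N - 2))
      = (n:ℝ) ^ N / (2 ^ N * (1 + (n:ℝ) ^ 2) ^ (N - 2)) := by
    have e1 : ((n:ℝ)/2) ^ N = ((n:ℝ)/2) * ((n:ℝ)/2) ^ (N-1) := by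
      rw [← pow_succ', hNk]
    have e2 : ((n:ℝ)/2) ^ N = (n:ℝ) ^ N / 2 ^ N := div_pow _ _ _
    have h12 : ((0:ℝ)) < (1 + (n:ℝ) ^ 2) ^ (N - 2) := by positivity
    field_simp at e1 e2 ⊢
    linear_combination (-(2:ℝ)^N) * e1 + 2 * e2
  rw [key] at h2
  have hpos : (0:ℝ) < (1 + (n:ℝ) ^ 2) ^ (N - 2) := by positivity
  have h2N : (0:ℝ) < 2 ^ N := by positivity
  rw [div_le_iff₀ (by positivity : (0:ℝ) < 2 ^ N * (1 + (n:ℝ) ^ 2) ^ (N - 2))] at h2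
  rw [hsplit, div_le_iff₀ hpos]
  nlinarith [mul_nonneg (mul_nonneg h2N.le h1) hpos.le]

lemma radial_nonneg (N n : ℕ) (hN : 3 ≤ N) (hn : 1 ≤ n) :
    0 ≤ ∫ r in Ioi (0:ℝ), r ^ (N-1) * (Θ N n r) ^ 2 := by
  rw [radial_split N n hN hn]
  exact add_nonneg (mul_nonneg (sq_nonneg _) (div_nonneg (xi_nonneg' N n) (by positivity)))
    (ann_nonneg N n)

lemma radial_bound (N n : ℕ) (hN : 3 ≤ N) (hn : 1 ≤ n) :
    ∫ r in Ioi (0:ℝ), r ^ (N-1) * (Θ N n r) ^ 2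
      ≤ (AN N ^ 2 * (1 + 2 ^ (2*N-1))) * (ξ N n / (n:ℝ) ^ 2) := by
  have hn0 : (0:ℝ) < n := by exact_mod_cast hn
  rw [radial_split N n hN hn]
  have hx := xi_lower N n (by omega) hn
  have h3 : (n:ℝ) ^ (N-2) / (1+(n:ℝ)^2) ^ (N-2) ≤ 2 ^ N * ξ N n / (n:ℝ) ^ 2 := by
    rw [div_le_div_iff₀ (by positivity) (by positivity)]
    have he : (n:ℝ) ^ (N-2) * (n:ℝ) ^ 2 = (n:ℝ) ^ N := by
      rw [← pow_add]; congr 1; omega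
    rw [he, div_le_iff₀ (by positivity)] at *
    nlinarith [hx]
  have hb := (ann_bound N n hN).trans
    (mul_le_mul_of_nonneg_left h3 (by positivity : (0:ℝ) ≤ 2 ^ (N-1) * AN N ^ 2))
  have hpw : (2:ℝ) ^ (N-1) * (2:ℝ) ^ N = (2:ℝ) ^ (2*N-1) := by
    rw [← pow_add]; congr 1; omega
  have : AN N ^ 2 * (ξ N n / (n:ℝ)^2) + 2 ^ (N-1) * AN N ^ 2 * (2 ^ N * ξ N n / (n:ℝ)^2)
      = (AN N ^ 2 * (1 + 2 ^ (2*N-1))) * (ξ N n / (n:ℝ)^2) := by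
    field_simp
    linear_combination AN N ^ 2 * ξ N n * hpw
  linarith [hb]

lemma part1 (N : ℕ) (hN : 3 ≤ N) :
    (fun n : ℕ => ∫ x : EuclideanSpace ℝ (Fin N), (Θ N n ‖x‖) ^ 2) =O[atTop]
      fun n : ℕ => ξ N n / (n : ℝ) ^ 2 := by
  haveI : Nonempty (Fin N) := ⟨⟨0, by omega⟩⟩
  haveI : Nontrivial (EuclideanSpace ℝ (Fin N)) := inferInstance
  set c := (volume (Metric.ball (0:EuclideanSpace ℝ (Fin N)) 1)).toReal with hcdef
  have hc : 0 ≤ c := ENNReal.toReal_nonneg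
  have hrep : ∀ n : ℕ, ∫ x : EuclideanSpace ℝ (Fin N), (Θ N n ‖x‖) ^ 2
      = (N:ℝ) * (c * ∫ r in Ioi (0:ℝ), r ^ (N-1) * (Θ N n r) ^ 2) := by
    intro n
    have h := integral_fun_norm_addHaar (volume : Measure (EuclideanSpace ℝ (Fin N)))
      (fun r => (Θ N n r) ^ 2)
    simpa only [finrank_euclideanSpace_fin, smul_eq_mul, nsmul_eq_mul, measureReal_def] using h
  rw [isBigO_iff]
  refine ⟨(N:ℝ) * c * (AN N ^ 2 * (1 + 2 ^ (2*N-1))), ?_⟩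
  filter_upwards [eventually_ge_atTop 1] with n hn
  have hI0 := radial_nonneg N n hN hn
  have hIb := radial_bound N n hN hn
  have hξ : 0 ≤ ξ N n / (n:ℝ) ^ 2 := div_nonneg (xi_nonneg' N n) (by positivity)
  rw [hrep n, Real.norm_eq_abs, Real.norm_eq_abs,
    abs_of_nonneg (mul_nonneg (Nat.cast_nonneg N) (mul_nonneg hc hI0)), abs_of_nonneg hξ]
  calc (N:ℝ) * (c * ∫ r in Ioi (0:ℝ), r ^ (N-1) * (Θ N n r) ^ 2)
      = ((N:ℝ) * c) * ∫ r in Ioi (0:ℝ), r ^ (N-1) * (Θ N n r) ^ 2 := by ring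
    _ ≤ ((N:ℝ) * c) * ((AN N ^ 2 * (1 + 2 ^ (2*N-1))) * (ξ N n / (n:ℝ)^2)) :=
        mul_le_mul_of_nonneg_left hIb (mul_nonneg (Nat.cast_nonneg N) hc)
    _ = (N:ℝ) * c * (AN N ^ 2 * (1 + 2 ^ (2*N-1))) * (ξ N n / (n:ℝ)^2) := by ring

lemma p2 (n : ℕ) : ξ 3 n ≤ (n : ℝ) := by
  have h := intervalIntegral.integral_mono_on (μ := volume) (a := (0:ℝ)) (b := (n:ℝ))
    (f := fun s : ℝ => s ^ (3 - 1) / (1 + s ^ 2) ^ (3 - 2)) (g := fun _ : ℝ => (1:ℝ))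
    (by positivity) ((fcont 3).intervalIntegrable _ _) intervalIntegrable_const ?_
  · simpa [ξ] using h
  · intro s hs
    have h0 := hs.1
    rw [div_le_one (by positivity)]
    norm_num

lemma p3 (n : ℕ) : ξ 4 n ≤ (1/2) * Real.log (1 + (n:ℝ) ^ 2) := by
  have hftc : ∫ s in (0:ℝ)..(n:ℝ), s / (1 + s ^ 2) = (1/2) * Real.log (1 + (n:ℝ)^2) := by
    have : ∀ x : ℝ, HasDerivAt (fun x : ℝ => (1/2) * Real.log (1 + x ^ 2)) (x / (1 + x ^ 2)) x := by
      intro x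
      have h1 : HasDerivAt (fun x : ℝ => 1 + x ^ 2) (2 * x) x := by
        simpa using ((hasDerivAt_pow 2 x).const_add 1)
      have h2 := (Real.hasDerivAt_log (by positivity : (1:ℝ) + x ^ 2 ≠ 0)).comp x h1
      have h3 := h2.const_mul (1/2 : ℝ)
      exact h3.congr_deriv (by ring)
    rw [intervalIntegral.integral_eq_sub_of_hasDerivAt (fun x _ => this x)
      ((Continuous.div (by fun_prop) (by fun_prop) (fun x => by positivity)).intervalIntegrable _ _)]
    norm_num
  rw [← hftc]
  apply intervalIntegral.integral_mono_on (by positivity) ((fcont 4).intervalIntegrable _ _)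
    ((Continuous.div (by fun_prop) (by fun_prop) (fun x => by positivity)).intervalIntegrable _ _)
  intro s hs
  have h0 := hs.1
  show s ^ (4-1) / (1 + s ^ 2) ^ (4-2) ≤ s / (1 + s ^ 2)
  norm_num
  rw [div_le_div_iff₀ (by positivity) (by positivity)]
  nlinarith

lemma p4 (N n : ℕ) (hN : 5 ≤ N) (hn : 1 ≤ n) : ξ N n ≤ 2 := by
  have hn1 : (1:ℝ) ≤ (n:ℝ) := by exact_mod_cast hn
  have hint : ∀ a b : ℝ, IntervalIntegrable (fun s : ℝ => s ^ (N - 1) / (1 + s ^ 2) ^ (N - 2)) volume a b :=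
    fun a b => (fcont N).intervalIntegrable a b
  have hsplit : ξ N n = (∫ s in (0:ℝ)..(1:ℝ), s ^ (N - 1) / (1 + s ^ 2) ^ (N - 2))
      + ∫ s in (1:ℝ)..(n:ℝ), s ^ (N - 1) / (1 + s ^ 2) ^ (N - 2) := by
    rw [ξ, ← intervalIntegral.integral_add_adjacent_intervals (hint 0 1) (hint 1 n)]
  have h1 : (∫ s in (0:ℝ)..(1:ℝ), s ^ (N - 1) / (1 + s ^ 2) ^ (N - 2)) ≤ 1 := by
    have h := intervalIntegral.integral_mono_on (μ := volume) (a := (0:ℝ)) (b := (1:ℝ))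
      (f := fun s : ℝ => s ^ (N - 1) / (1 + s ^ 2) ^ (N - 2)) (g := fun _ : ℝ => (1:ℝ))
      (by norm_num) (hint _ _) intervalIntegrable_const ?_
    · simpa using h
    · intro s hs
      rw [div_le_one (by positivity)]
      calc s ^ (N-1) ≤ 1 := pow_le_one₀ hs.1 hs.2
        _ ≤ (1 + s ^ 2) ^ (N - 2) := one_le_pow₀ (by nlinarith [sq_nonneg s])
  have h2 : (∫ s in (1:ℝ)..(n:ℝ), s ^ (N - 1) / (1 + s ^ 2) ^ (N - 2)) ≤ 1 := by
    have hinv : ∫ s in (1:ℝ)..(n:ℝ), (s ^ 2)⁻¹ = 1 - ((n:ℝ))⁻¹ := by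
      have : ∀ x ∈ Set.uIcc (1:ℝ) (n:ℝ), HasDerivAt (fun x : ℝ => -(x⁻¹)) ((x ^ 2)⁻¹) x := by
        intro x hx
        rw [Set.uIcc_of_le hn1] at hx
        have hx0 : x ≠ 0 := by have := hx.1; intro h; simp [h] at this; linarith
        simpa [sq] using (hasDerivAt_inv hx0).fun_neg
      rw [intervalIntegral.integral_eq_sub_of_hasDerivAt this]
      · ring
      · apply ContinuousOn.intervalIntegrable
        apply ContinuousOn.inv₀ (by fun_prop)
        intro x hx
        rw [Set.uIcc_of_le hn1] at hx
        have := hx.1; positivity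
    have h := intervalIntegral.integral_mono_on (μ := volume) (a := (1:ℝ)) (b := (n:ℝ))
      (f := fun s : ℝ => s ^ (N - 1) / (1 + s ^ 2) ^ (N - 2)) (g := fun s : ℝ => (s ^ 2)⁻¹)
      hn1 (hint _ _) ?_ ?_
    · rw [hinv] at h
      have : (0:ℝ) < (n:ℝ)⁻¹ := by positivity
      linarith
    · apply ContinuousOn.intervalIntegrable
      apply ContinuousOn.inv₀ (by fun_prop)
      intro x hx
      rw [Set.uIcc_of_le hn1] at hx
      have := hx.1; positivity
    · intro s hs
      have hs1 := hs.1
      have hs0 : (0:ℝ) < s := by linarith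
      have key : s ^ (N-1) * s ^ 2 ≤ (1 + s ^ 2) ^ (N - 2) := by
        calc s ^ (N-1) * s ^ 2 = s ^ (N+1) := by rw [← pow_add]; congr 1; omega
          _ ≤ s ^ (2 * (N-2)) := pow_le_pow_right₀ hs1 (by omega)
          _ = (s ^ 2) ^ (N-2) := pow_mul s 2 (N-2)
          _ ≤ (1 + s ^ 2) ^ (N-2) := pow_le_pow_left₀ (by positivity) (by nlinarith) _
      show s ^ (N - 1) / (1 + s ^ 2) ^ (N - 2) ≤ (s ^ 2)⁻¹
      rw [inv_eq_one_div, div_le_div_iff₀ (by positivity) (by positivity), one_mul]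
      exact key
  linarith [hsplit, h1, h2]

end Aux

/-- Mass asymptotics of the truncated Aubin–Talenti bubble: `‖U_n‖₂² = O(ξ(n)/n²)`, where
`ξ(n) = O(n)` for `N = 3`, `ξ(n) = O(log(1+n²))` for `N = 4`, and `ξ(n) = O(1)` for `N ≥ 5`. -/
theorem stmt16 (N : ℕ) (hN : 3 ≤ N) :
    ((fun n : ℕ => ∫ x : EuclideanSpace ℝ (Fin N), (Θ N n ‖x‖) ^ 2) =O[atTop]
      fun n : ℕ => ξ N n / (n : ℝ) ^ 2) ∧
    (N = 3 → (fun n : ℕ => ξ N n) =O[atTop] fun n : ℕ => (n : ℝ)) ∧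
    (N = 4 → (fun n : ℕ => ξ N n) =O[atTop] fun n : ℕ => Real.log (1 + (n : ℝ) ^ 2)) ∧
    (5 ≤ N → (fun n : ℕ => ξ N n) =O[atTop] fun _ : ℕ => (1 : ℝ)) := by
  refine ⟨part1 N hN, ?_, ?_, ?_⟩
  · rintro rfl
    rw [isBigO_iff]
    refine ⟨1, Eventually.of_forall fun n => ?_⟩
    rw [Real.norm_eq_abs, Real.norm_eq_abs, abs_of_nonneg (xi_nonneg' 3 n),
      abs_of_nonneg (Nat.cast_nonneg n), one_mul]
    exact p2 n
  · rintro rfl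
    rw [isBigO_iff]
    refine ⟨1/2, Eventually.of_forall fun n => ?_⟩
    rw [Real.norm_eq_abs, Real.norm_eq_abs, abs_of_nonneg (xi_nonneg' 4 n),
      abs_of_nonneg (Real.log_nonneg (by nlinarith [sq_nonneg ((n:ℕ):ℝ)]))]
    exact p3 n
  · intro h5
    rw [isBigO_iff]
    refine ⟨2, ?_⟩
    filter_upwards [eventually_ge_atTop 1] with n hn
    rw [Real.norm_eq_abs, Real.norm_eq_abs, abs_of_nonneg (xi_nonneg' N n), abs_one, mul_one]
    exact p4 N n h5 hn
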